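/- Define I₁(ρ₂, σ) = (1/(2√ρ₂)) ∫₁^{ρ₂σ} dt/√(t(t-1)) and I₂(ρ₁, σ) = (1/(2ρ₁)) ∫₂^σ log(t-1)/(t·(1 - t/σ)^(1/2)) dt. Then with ρ₁ = 1/2, ρ₂ = 3/7, σ = 3, one has I₁(ρ₂, σ) > I₂(ρ₁, σ) + 10^(-3). -/

import Mathlib

open MeasureTheory intervalIntegral

namespace Stmt13Aux

lemma le_rpow_half {r x : ℝ} (hr : 0 ≤ r) (h : r ^ 2 ≤ x) : r ≤ x ^ ((1:ℝ)/2) := by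
  rw [← Real.sqrt_eq_rpow]
  exact (Real.le_sqrt hr (le_trans (sq_nonneg r) h)).2 h

lemma rpow_half_le {r x : ℝ} (hr : 0 ≤ r) (h : x ≤ r ^ 2) : x ^ ((1:ℝ)/2) ≤ r := by
  rw [← Real.sqrt_eq_rpow]
  exact Real.sqrt_le_iff.2 ⟨hr, h⟩

lemma int_shift_right (a b : ℝ) :
    ∫ t in a..b, (t - 1) ^ (-(1/2) : ℝ)
      = 2 * ((b - 1) ^ ((1:ℝ)/2) - (a - 1) ^ ((1:ℝ)/2)) := by
  rw [intervalIntegral.integral_comp_sub_right (fun u => u ^ (-(1/2) : ℝ)) 1,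
    integral_rpow (Or.inl (by norm_num))]
  norm_num
  ring

lemma int_shift_left (a b : ℝ) :
    ∫ t in a..b, (3 - t) ^ (-(1/2) : ℝ)
      = 2 * ((3 - a) ^ ((1:ℝ)/2) - (3 - b) ^ ((1:ℝ)/2)) := by
  rw [intervalIntegral.integral_comp_sub_left (fun u => u ^ (-(1/2) : ℝ)) 3,
    integral_rpow (Or.inl (by norm_num))]
  norm_num
  ring

lemma log43 : Real.log (4/3 : ℝ) ≤ 0.28796 := by
  have h1 : Real.log ((4/3:ℝ) ^ (5:ℕ)) = 5 * Real.log (4/3) := by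
    rw [Real.log_pow]; norm_num
  have h2 : ((4/3:ℝ) ^ (5:ℕ)) = 4 * (256/243) := by norm_num
  have h3 : Real.log ((4:ℝ) * (256/243)) = Real.log 4 + Real.log (256/243) :=
    Real.log_mul (by norm_num) (by norm_num)
  have h4 : Real.log (4:ℝ) = 2 * Real.log 2 := by
    rw [show (4:ℝ) = 2 ^ (2:ℕ) by norm_num, Real.log_pow]; norm_num
  have h5 : Real.log ((256:ℝ)/243) ≤ 256/243 - 1 :=
    Real.log_le_sub_one_of_pos (by norm_num)
  have h6 : Real.log 2 ≤ 0.6931471808 := Real.log_two_lt_d9.le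
  rw [h2, h3, h4] at h1
  linarith

lemma log53 : Real.log (5/3 : ℝ) ≤ 0.51099 := by
  have h1 : Real.log ((5/3:ℝ) ^ (4:ℕ)) = 4 * Real.log (5/3) := by
    rw [Real.log_pow]; norm_num
  have h2 : ((5/3:ℝ) ^ (4:ℕ)) = 8 * (625/648) := by norm_num
  have h3 : Real.log ((8:ℝ) * (625/648)) = Real.log 8 + Real.log (625/648) :=
    Real.log_mul (by norm_num) (by norm_num)
  have h4 : Real.log (8:ℝ) = 3 * Real.log 2 := by
    rw [show (8:ℝ) = 2 ^ (3:ℕ) by norm_num, Real.log_pow]; norm_num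
  have h5 : Real.log ((625:ℝ)/648) ≤ 625/648 - 1 :=
    Real.log_le_sub_one_of_pos (by norm_num)
  have h6 : Real.log 2 ≤ 0.6931471808 := Real.log_two_lt_d9.le
  rw [h2, h3, h4] at h1
  linarith

lemma logbound {b L t : ℝ} (hb : 1 < b) (hL : Real.log (b - 1) ≤ L)
    (ht : 1 < t) (htb : t ≤ b) :
    Real.log (t - 1) ≤ L + (t - b) / (b - 1) := by
  have h1 : (0:ℝ) < t - 1 := by linarith
  have h2 : (0:ℝ) < b - 1 := by linarith
  have h3 := Real.log_le_sub_one_of_pos (div_pos h1 h2)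
  rw [Real.log_div h1.ne' h2.ne'] at h3
  have h4 : (t - 1) / (b - 1) - 1 = (t - b) / (b - 1) := by
    field_simp
    ring
  linarith

/-- pointwise bound for the second integrand -/
lemma pieceJ2pt {c t : ℝ} (ht2 : 2 ≤ t) (ht3 : t ≤ 3)
    (hlog : Real.log (t - 1) ≤ c * t) :
    Real.log (t - 1) / (t * Real.sqrt (1 - t/3))
      ≤ c * Real.sqrt 3 * (3 - t) ^ (-(1/2) : ℝ) := by
  rcases eq_or_lt_of_le ht3 with h3 | h3
  · rw [h3]
    rw [show (1 - (3:ℝ)/3) = 0 by norm_num, Real.sqrt_zero, mul_zero, div_zero,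
      show ((3:ℝ) - 3) = 0 by norm_num, Real.zero_rpow (by norm_num : (-(1/2):ℝ) ≠ 0),
      mul_zero]
  · have hs : (0:ℝ) < 3 - t := by linarith
    have e1 : Real.sqrt (1 - t/3) = Real.sqrt (3 - t) / Real.sqrt 3 := by
      rw [show (1 - t/3 : ℝ) = (3 - t)/3 by ring, Real.sqrt_div hs.le]
    have e2 : (3 - t) ^ (-(1/2) : ℝ) = (Real.sqrt (3 - t))⁻¹ := by
      rw [show (-(1/2) : ℝ) = -(1/2) by norm_num, Real.rpow_neg hs.le,
        ← Real.sqrt_eq_rpow]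
    have hst : (0:ℝ) < Real.sqrt (3 - t) := Real.sqrt_pos.2 hs
    have hs3 : (0:ℝ) < Real.sqrt 3 := Real.sqrt_pos.2 (by norm_num)
    have ht0 : (0:ℝ) < t := by linarith
    rw [e1, e2]
    rw [div_le_iff₀ (by positivity : (0:ℝ) < t * (Real.sqrt (3 - t) / Real.sqrt 3))]
    have : c * Real.sqrt 3 * (Real.sqrt (3 - t))⁻¹ * (t * (Real.sqrt (3 - t) / Real.sqrt 3))
        = c * t := by
      field_simp
    rw [this]
    exact hlog

/-- pointwise bound for the first integrand -/
lemma pieceJ1pt {q r b t : ℝ} (hq : 0 ≤ q) (ht1 : 1 ≤ t) (htb : t ≤ b)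
    (hr : Real.sqrt b ≤ r) (hqr : q * r ≤ 1) :
    q * (t - 1) ^ (-(1/2) : ℝ) ≤ 1 / Real.sqrt (t * (t - 1)) := by
  rcases eq_or_lt_of_le ht1 with h1 | h1
  · rw [← h1]
    norm_num [Real.zero_rpow (by norm_num : (-(1/2):ℝ) ≠ 0)]
  · have h0 : (0:ℝ) < t - 1 := by linarith
    have ht0 : (0:ℝ) < t := by linarith
    have e2 : (t - 1) ^ (-(1/2) : ℝ) = (Real.sqrt (t - 1))⁻¹ := by
      rw [Real.rpow_neg h0.le, ← Real.sqrt_eq_rpow]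
    rw [e2, Real.sqrt_mul ht0.le, one_div, mul_inv]
    have hs : (0:ℝ) < Real.sqrt (t - 1) := Real.sqrt_pos.2 h0
    have hst : (0:ℝ) < Real.sqrt t := Real.sqrt_pos.2 ht0
    have h2 : Real.sqrt t ≤ r := le_trans (Real.sqrt_le_sqrt htb) hr
    have h3 : q * Real.sqrt t ≤ 1 := le_trans (mul_le_mul_of_nonneg_left h2 hq) hqr
    have h4 : q ≤ (Real.sqrt t)⁻¹ := by
      rw [← one_div]
      exact (le_div_iff₀ hst).2 h3
    exact mul_le_mul_of_nonneg_right h4 (inv_nonneg.2 hs.le)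

end Stmt13Aux

open Stmt13Aux

set_option maxHeartbeats 2000000 in
/-- Numerical inequality I₁(3/7, 3) > I₂(1/2, 3) + 10⁻³ between the sieve
integrals, with ρ₁ = 1/2, ρ₂ = 3/7, σ = 3. -/
theorem stmt_13 :
    (1 / (2 * Real.sqrt (3/7))) * (∫ t in (1:ℝ)..(9/7), 1 / Real.sqrt (t * (t - 1)))
      > (1 / (2 * (1/2 : ℝ))) *
          (∫ t in (2:ℝ)..3, Real.log (t - 1) / (t * Real.sqrt (1 - t/3)))
        + 10 ^ (-3 : ℤ) := by
  -- base integrable functions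
  have hbase1 : IntervalIntegrable (fun t : ℝ => (t - 1) ^ (-(1/2) : ℝ)) volume 1 (9/7) := by
    have h := (intervalIntegrable_rpow' (a := 0) (b := 2/7)
      (by norm_num : (-1:ℝ) < -(1/2))).comp_sub_right 1
    norm_num at h
    exact h
  have hbase2 : IntervalIntegrable (fun t : ℝ => (3 - t) ^ (-(1/2) : ℝ)) volume 2 3 := by
    have h := (intervalIntegrable_rpow' (a := 1) (b := 0)
      (by norm_num : (-1:ℝ) < -(1/2))).comp_sub_left 3
    norm_num at h
    exact h
  -- integrability of the two integrands
  have hm1 : AEStronglyMeasurable (fun t : ℝ => 1 / Real.sqrt (t * (t - 1)))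
      (volume.restrict (Set.uIoc (1:ℝ) (9/7))) := by
    apply Measurable.aestronglyMeasurable
    fun_prop
  have hInt1 : IntervalIntegrable (fun t : ℝ => 1 / Real.sqrt (t * (t - 1))) volume 1 (9/7) := by
    apply hbase1.mono_fun hm1
    filter_upwards [MeasureTheory.ae_restrict_mem measurableSet_uIoc] with t ht
    rw [Set.uIoc_of_le (by norm_num : (1:ℝ) ≤ 9/7)] at ht
    have h1 : (0:ℝ) < t - 1 := by linarith [ht.1]
    have ht0 : (0:ℝ) < t := by linarith [ht.1]
    have e2 : (t - 1) ^ (-(1/2) : ℝ) = (Real.sqrt (t - 1))⁻¹ := by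
      rw [Real.rpow_neg h1.le, ← Real.sqrt_eq_rpow]
    rw [Real.norm_eq_abs, Real.norm_eq_abs, abs_of_nonneg (by positivity),
      abs_of_nonneg (by positivity), e2, Real.sqrt_mul ht0.le, one_div, mul_inv]
    have hs : (0:ℝ) < Real.sqrt (t - 1) := Real.sqrt_pos.2 h1
    have hst : (1:ℝ) ≤ Real.sqrt t := by
      rw [← Real.sqrt_one]
      exact Real.sqrt_le_sqrt (by linarith)
    exact mul_le_of_le_one_left (inv_nonneg.2 hs.le) (inv_le_one_of_one_le₀ hst)
  have hm2 : AEStronglyMeasurable (fun t : ℝ => Real.log (t - 1) / (t * Real.sqrt (1 - t/3)))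
      (volume.restrict (Set.uIoc (2:ℝ) 3)) := by
    apply Measurable.aestronglyMeasurable
    apply Measurable.div
    · exact Real.measurable_log.comp (measurable_id.sub measurable_const)
    · exact measurable_id.mul
        (Real.continuous_sqrt.measurable.comp (measurable_const.sub (measurable_id.div_const 3)))
  have hg2 : IntervalIntegrable (fun t : ℝ => Real.sqrt 3 * (3 - t) ^ (-(1/2) : ℝ))
      volume 2 3 := hbase2.const_mul _
  have hInt2 : IntervalIntegrable
      (fun t : ℝ => Real.log (t - 1) / (t * Real.sqrt (1 - t/3))) volume 2 3 := by
    apply hg2.mono_fun' hm2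
    filter_upwards [MeasureTheory.ae_restrict_mem measurableSet_uIoc] with t ht
    rw [Set.uIoc_of_le (by norm_num : (2:ℝ) ≤ 3)] at ht
    have ht2 : (2:ℝ) < t := ht.1
    have hnn : 0 ≤ Real.log (t - 1) / (t * Real.sqrt (1 - t/3)) :=
      div_nonneg (Real.log_nonneg (by linarith)) (mul_nonneg (by linarith) (Real.sqrt_nonneg _))
    rw [Real.norm_eq_abs, abs_of_nonneg hnn]
    have hlog : Real.log (t - 1) ≤ 1 * t := by
      have := Real.log_le_sub_one_of_pos (show (0:ℝ) < t - 1 by linarith)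
      linarith
    have := pieceJ2pt (le_of_lt ht2) ht.2 hlog
    simpa using this
  -- subinterval integrability
  have hsub1 : ∀ a b : ℝ, 1 ≤ a → b ≤ 9/7 → a ≤ b →
      IntervalIntegrable (fun t : ℝ => 1 / Real.sqrt (t * (t - 1))) volume a b := by
    intro a b ha hb hab
    apply hInt1.mono_set
    rw [Set.uIcc_of_le hab, Set.uIcc_of_le (by norm_num : (1:ℝ) ≤ 9/7)]
    exact Set.Icc_subset_Icc ha hb
  have hsub2 : ∀ a b : ℝ, 2 ≤ a → b ≤ 3 → a ≤ b →
      IntervalIntegrable (fun t : ℝ => Real.log (t - 1) / (t * Real.sqrt (1 - t/3)))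
        volume a b := by
    intro a b ha hb hab
    apply hInt2.mono_set
    rw [Set.uIcc_of_le hab, Set.uIcc_of_le (by norm_num : (2:ℝ) ≤ 3)]
    exact Set.Icc_subset_Icc ha hb
  have hbsub1 : ∀ a b : ℝ, 1 ≤ a → b ≤ 9/7 → a ≤ b →
      IntervalIntegrable (fun t : ℝ => (t - 1) ^ (-(1/2) : ℝ)) volume a b := by
    intro a b ha hb hab
    apply hbase1.mono_set
    rw [Set.uIcc_of_le hab, Set.uIcc_of_le (by norm_num : (1:ℝ) ≤ 9/7)]
    exact Set.Icc_subset_Icc ha hb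
  have hbsub2 : ∀ a b : ℝ, 2 ≤ a → b ≤ 3 → a ≤ b →
      IntervalIntegrable (fun t : ℝ => (3 - t) ^ (-(1/2) : ℝ)) volume a b := by
    intro a b ha hb hab
    apply hbase2.mono_set
    rw [Set.uIcc_of_le hab, Set.uIcc_of_le (by norm_num : (2:ℝ) ≤ 3)]
    exact Set.Icc_subset_Icc ha hb
  -- J1 piece lower bounds
  have hq1 : (0.955:ℝ) * (2 * (((23:ℝ)/21 - 1) ^ ((1:ℝ)/2) - ((1:ℝ) - 1) ^ ((1:ℝ)/2)))
      ≤ ∫ t in (1:ℝ)..(23/21), 1 / Real.sqrt (t * (t - 1)) := by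
    have h := intervalIntegral.integral_mono_on (by norm_num : (1:ℝ) ≤ 23/21)
      ((hbsub1 1 (23/21) (by norm_num) (by norm_num) (by norm_num)).const_mul 0.955)
      (hsub1 1 (23/21) (by norm_num) (by norm_num) (by norm_num))
      (fun t ht => pieceJ1pt (by norm_num) ht.1 ht.2
        (Real.sqrt_le_iff.2 ⟨by norm_num, by norm_num⟩ : Real.sqrt ((23:ℝ)/21) ≤ 1.0471)
        (by norm_num))
    rwa [intervalIntegral.integral_const_mul, int_shift_right] at h
  have hq2 : (0.9165:ℝ) * (2 * (((25:ℝ)/21 - 1) ^ ((1:ℝ)/2) - ((23:ℝ)/21 - 1) ^ ((1:ℝ)/2)))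
      ≤ ∫ t in ((23:ℝ)/21)..(25/21), 1 / Real.sqrt (t * (t - 1)) := by
    have h := intervalIntegral.integral_mono_on (by norm_num : ((23:ℝ)/21) ≤ 25/21)
      ((hbsub1 (23/21) (25/21) (by norm_num) (by norm_num) (by norm_num)).const_mul 0.9165)
      (hsub1 (23/21) (25/21) (by norm_num) (by norm_num) (by norm_num))
      (fun t ht => pieceJ1pt (by norm_num) (le_trans (by norm_num) ht.1) ht.2
        (Real.sqrt_le_iff.2 ⟨by norm_num, by norm_num⟩ : Real.sqrt ((25:ℝ)/21) ≤ 1.0911)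
        (by norm_num))
    rwa [intervalIntegral.integral_const_mul, int_shift_right] at h
  have hq3 : (0.8819:ℝ) * (2 * (((9:ℝ)/7 - 1) ^ ((1:ℝ)/2) - ((25:ℝ)/21 - 1) ^ ((1:ℝ)/2)))
      ≤ ∫ t in ((25:ℝ)/21)..(9/7), 1 / Real.sqrt (t * (t - 1)) := by
    have h := intervalIntegral.integral_mono_on (by norm_num : ((25:ℝ)/21) ≤ 9/7)
      ((hbsub1 (25/21) (9/7) (by norm_num) (by norm_num) (by norm_num)).const_mul 0.8819)
      (hsub1 (25/21) (9/7) (by norm_num) (by norm_num) (by norm_num))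
      (fun t ht => pieceJ1pt (by norm_num) (le_trans (by norm_num) ht.1) ht.2
        (Real.sqrt_le_iff.2 ⟨by norm_num, by norm_num⟩ : Real.sqrt ((9:ℝ)/7) ≤ 1.1339)
        (by norm_num))
    rwa [intervalIntegral.integral_const_mul, int_shift_right] at h
  have hsplit1 : (∫ t in (1:ℝ)..(23/21), 1 / Real.sqrt (t * (t - 1)))
      + (∫ t in ((23:ℝ)/21)..(25/21), 1 / Real.sqrt (t * (t - 1)))
      + (∫ t in ((25:ℝ)/21)..(9/7), 1 / Real.sqrt (t * (t - 1)))
      = ∫ t in (1:ℝ)..(9/7), 1 / Real.sqrt (t * (t - 1)) := by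
    rw [intervalIntegral.integral_add_adjacent_intervals
        (hsub1 1 (23/21) (by norm_num) (by norm_num) (by norm_num))
        (hsub1 (23/21) (25/21) (by norm_num) (by norm_num) (by norm_num)),
      intervalIntegral.integral_add_adjacent_intervals
        (hsub1 1 (25/21) (by norm_num) (by norm_num) (by norm_num))
        (hsub1 (25/21) (9/7) (by norm_num) (by norm_num) (by norm_num))]
  have hJ1 : (0.9967:ℝ) ≤ ∫ t in (1:ℝ)..(9/7), 1 / Real.sqrt (t * (t - 1)) := by
    have hZ : ((1:ℝ) - 1) ^ ((1:ℝ)/2) = 0 := by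
      rw [show ((1:ℝ) - 1) = 0 by norm_num, Real.zero_rpow (by norm_num : ((1:ℝ)/2) ≠ 0)]
    have hA1 : (0.30860:ℝ) ≤ ((23:ℝ)/21 - 1) ^ ((1:ℝ)/2) := by
      rw [show ((23:ℝ)/21 - 1) = 2/21 by norm_num]
      exact le_rpow_half (by norm_num) (by norm_num)
    have hA2 : ((23:ℝ)/21 - 1) ^ ((1:ℝ)/2) ≤ 0.30861 := by
      rw [show ((23:ℝ)/21 - 1) = 2/21 by norm_num]
      exact rpow_half_le (by norm_num) (by norm_num)
    have hB1 : (0.43643:ℝ) ≤ ((25:ℝ)/21 - 1) ^ ((1:ℝ)/2) := by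
      rw [show ((25:ℝ)/21 - 1) = 4/21 by norm_num]
      exact le_rpow_half (by norm_num) (by norm_num)
    have hB2 : ((25:ℝ)/21 - 1) ^ ((1:ℝ)/2) ≤ 0.43644 := by
      rw [show ((25:ℝ)/21 - 1) = 4/21 by norm_num]
      exact rpow_half_le (by norm_num) (by norm_num)
    have hC1 : (0.53452:ℝ) ≤ ((9:ℝ)/7 - 1) ^ ((1:ℝ)/2) := by
      rw [show ((9:ℝ)/7 - 1) = 2/7 by norm_num]
      exact le_rpow_half (by norm_num) (by norm_num)
    rw [← hsplit1]
    linarith [hq1, hq2, hq3]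
  -- J2 piece upper bounds
  have hp1 : (∫ t in (2:ℝ)..(7/3), Real.log (t - 1) / (t * Real.sqrt (1 - t/3)))
      ≤ 0.1235 * Real.sqrt 3
        * (2 * (((3:ℝ) - 2) ^ ((1:ℝ)/2) - ((3:ℝ) - 7/3) ^ ((1:ℝ)/2))) := by
    have h := intervalIntegral.integral_mono_on (by norm_num : (2:ℝ) ≤ 7/3)
      (hsub2 2 (7/3) (by norm_num) (by norm_num) (by norm_num))
      ((hbsub2 2 (7/3) (by norm_num) (by norm_num) (by norm_num)).const_mul
        (0.1235 * Real.sqrt 3))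
      (fun t ht => by
        have hlog : Real.log (t - 1) ≤ 0.1235 * t := by
          have hlb := logbound (b := 7/3) (L := 0.28796) (by norm_num)
            (show Real.log ((7:ℝ)/3 - 1) ≤ 0.28796 by
              rw [show ((7:ℝ)/3 - 1) = 4/3 by norm_num]; exact log43)
            (show (1:ℝ) < t by linarith [ht.1]) ht.2
          have e : (t - 7/3) / ((7:ℝ)/3 - 1) = 0.75 * t - 1.75 := by ring
          rw [e] at hlb
          linarith [ht.2]
        exact pieceJ2pt ht.1 (le_trans ht.2 (by norm_num)) hlog)
    rwa [intervalIntegral.integral_const_mul, int_shift_left] at h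
  have hp2 : (∫ t in ((7:ℝ)/3)..(8/3), Real.log (t - 1) / (t * Real.sqrt (1 - t/3)))
      ≤ 0.1917 * Real.sqrt 3
        * (2 * (((3:ℝ) - 7/3) ^ ((1:ℝ)/2) - ((3:ℝ) - 8/3) ^ ((1:ℝ)/2))) := by
    have h := intervalIntegral.integral_mono_on (by norm_num : ((7:ℝ)/3) ≤ 8/3)
      (hsub2 (7/3) (8/3) (by norm_num) (by norm_num) (by norm_num))
      ((hbsub2 (7/3) (8/3) (by norm_num) (by norm_num) (by norm_num)).const_mul
        (0.1917 * Real.sqrt 3))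
      (fun t ht => by
        have hlog : Real.log (t - 1) ≤ 0.1917 * t := by
          have hlb := logbound (b := 8/3) (L := 0.51099) (by norm_num)
            (show Real.log ((8:ℝ)/3 - 1) ≤ 0.51099 by
              rw [show ((8:ℝ)/3 - 1) = 5/3 by norm_num]; exact log53)
            (show (1:ℝ) < t by linarith [ht.1]) ht.2
          have e : (t - 8/3) / ((8:ℝ)/3 - 1) = 0.6 * t - 1.6 := by ring
          rw [e] at hlb
          linarith [ht.2]
        exact pieceJ2pt (le_trans (by norm_num) ht.1) (le_trans ht.2 (by norm_num)) hlog)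
    rwa [intervalIntegral.integral_const_mul, int_shift_left] at h
  have hp3 : (∫ t in ((8:ℝ)/3)..3, Real.log (t - 1) / (t * Real.sqrt (1 - t/3)))
      ≤ 0.23105 * Real.sqrt 3
        * (2 * (((3:ℝ) - 8/3) ^ ((1:ℝ)/2) - ((3:ℝ) - 3) ^ ((1:ℝ)/2))) := by
    have h := intervalIntegral.integral_mono_on (by norm_num : ((8:ℝ)/3) ≤ 3)
      (hsub2 (8/3) 3 (by norm_num) (by norm_num) (by norm_num))
      ((hbsub2 (8/3) 3 (by norm_num) (by norm_num) (by norm_num)).const_mul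
        (0.23105 * Real.sqrt 3))
      (fun t ht => by
        have hlog : Real.log (t - 1) ≤ 0.23105 * t := by
          have hlb := logbound (b := 3) (L := 0.6931471808) (by norm_num)
            (show Real.log ((3:ℝ) - 1) ≤ 0.6931471808 by
              rw [show ((3:ℝ) - 1) = 2 by norm_num]; exact Real.log_two_lt_d9.le)
            (show (1:ℝ) < t by linarith [ht.1]) ht.2
          have e : (t - 3) / ((3:ℝ) - 1) = 0.5 * t - 1.5 := by ring
          rw [e] at hlb
          linarith [ht.2]
        exact pieceJ2pt (le_trans (by norm_num) ht.1) ht.2 hlog)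
    rwa [intervalIntegral.integral_const_mul, int_shift_left] at h
  have hsplit2 : (∫ t in (2:ℝ)..(7/3), Real.log (t - 1) / (t * Real.sqrt (1 - t/3)))
      + (∫ t in ((7:ℝ)/3)..(8/3), Real.log (t - 1) / (t * Real.sqrt (1 - t/3)))
      + (∫ t in ((8:ℝ)/3)..3, Real.log (t - 1) / (t * Real.sqrt (1 - t/3)))
      = ∫ t in (2:ℝ)..3, Real.log (t - 1) / (t * Real.sqrt (1 - t/3)) := by
    rw [intervalIntegral.integral_add_adjacent_intervals
        (hsub2 2 (7/3) (by norm_num) (by norm_num) (by norm_num))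
        (hsub2 (7/3) (8/3) (by norm_num) (by norm_num) (by norm_num)),
      intervalIntegral.integral_add_adjacent_intervals
        (hsub2 2 (8/3) (by norm_num) (by norm_num) (by norm_num))
        (hsub2 (8/3) 3 (by norm_num) (by norm_num) (by norm_num))]
  have hJ2 : (∫ t in (2:ℝ)..3, Real.log (t - 1) / (t * Real.sqrt (1 - t/3))) ≤ 0.69942 := by
    have hone : ((3:ℝ) - 2) ^ ((1:ℝ)/2) = 1 := by
      rw [show ((3:ℝ) - 2) = 1 by norm_num, Real.one_rpow]
    have hzero : ((3:ℝ) - 3) ^ ((1:ℝ)/2) = 0 := by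
      rw [show ((3:ℝ) - 3) = 0 by norm_num, Real.zero_rpow (by norm_num : ((1:ℝ)/2) ≠ 0)]
    have hx1 : (0.8164:ℝ) ≤ ((3:ℝ) - 7/3) ^ ((1:ℝ)/2) := by
      rw [show ((3:ℝ) - 7/3) = 2/3 by norm_num]
      exact le_rpow_half (by norm_num) (by norm_num)
    have hx2 : ((3:ℝ) - 7/3) ^ ((1:ℝ)/2) ≤ 0.8165 := by
      rw [show ((3:ℝ) - 7/3) = 2/3 by norm_num]
      exact rpow_half_le (by norm_num) (by norm_num)
    have hy1 : (0.57735:ℝ) ≤ ((3:ℝ) - 8/3) ^ ((1:ℝ)/2) := by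
      rw [show ((3:ℝ) - 8/3) = 1/3 by norm_num]
      exact le_rpow_half (by norm_num) (by norm_num)
    have hy2 : ((3:ℝ) - 8/3) ^ ((1:ℝ)/2) ≤ 0.57736 := by
      rw [show ((3:ℝ) - 8/3) = 1/3 by norm_num]
      exact rpow_half_le (by norm_num) (by norm_num)
    have hs : Real.sqrt 3 ≤ 1.7320509 := Real.sqrt_le_iff.2 ⟨by norm_num, by norm_num⟩
    have hs0 : (0:ℝ) ≤ Real.sqrt 3 := Real.sqrt_nonneg 3
    set x := ((3:ℝ) - 7/3) ^ ((1:ℝ)/2) with hxdef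
    set y := ((3:ℝ) - 8/3) ^ ((1:ℝ)/2) with hydef
    rw [← hsplit2]
    have hQ : 0.1235 * (2 * (1 - x)) + 0.1917 * (2 * (x - y)) + 0.23105 * (2 * (y - 0))
        ≤ 0.40381 := by linarith
    have hQ0 : (0:ℝ) ≤ 0.1235 * (2 * (1 - x)) + 0.1917 * (2 * (x - y))
        + 0.23105 * (2 * (y - 0)) := by linarith
    have hT : 0.1235 * Real.sqrt 3 * (2 * (((3:ℝ) - 2) ^ ((1:ℝ)/2) - x))
        + 0.1917 * Real.sqrt 3 * (2 * (x - y))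
        + 0.23105 * Real.sqrt 3 * (2 * (y - ((3:ℝ) - 3) ^ ((1:ℝ)/2)))
        = Real.sqrt 3 * (0.1235 * (2 * (1 - x)) + 0.1917 * (2 * (x - y))
            + 0.23105 * (2 * (y - 0))) := by
      rw [hone, hzero]; ring
    have hprod : Real.sqrt 3 * (0.1235 * (2 * (1 - x)) + 0.1917 * (2 * (x - y))
        + 0.23105 * (2 * (y - 0))) ≤ 1.7320509 * 0.40381 :=
      mul_le_mul hs hQ hQ0 (by norm_num)
    linarith [hp1, hp2, hp3, hT, hprod]
  -- prefactor bound
  have hsp : (0:ℝ) < Real.sqrt (3/7) := Real.sqrt_pos.2 (by norm_num)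
  have h37 : Real.sqrt (3/7) ≤ 0.654654 := Real.sqrt_le_iff.2 ⟨by norm_num, by norm_num⟩
  have hpre : (0.7637:ℝ) ≤ 1 / (2 * Real.sqrt (3/7)) := by
    rw [le_div_iff₀ (by positivity)]
    nlinarith [h37, hsp.le]
  have hmul : (0.7637:ℝ) * 0.9967
      ≤ (1 / (2 * Real.sqrt (3/7))) * (∫ t in (1:ℝ)..(9/7), 1 / Real.sqrt (t * (t - 1))) :=
    mul_le_mul hpre hJ1 (by norm_num) (le_trans (by norm_num) hpre)
  have h10 : ((10:ℝ) ^ (-3:ℤ)) = 0.001 := by norm_num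
  rw [gt_iff_lt, h10, show (1 / (2 * (1/2:ℝ))) = 1 by norm_num, one_mul]
  linarith [hmul, hJ2]
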